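/- Let f : [0,∞) → [0,∞) be continuous, let a : [0,1] → [0,∞) be continuous with α = ∫₀¹ a(t) dt satisfying 0 < α < 1, and define (Au)(t) = ∫₀¹ ( G(t,s) + (1/(1-α)) ∫₀¹ a(τ) G(τ,s) dτ ) f(u(s)) ds. Suppose f is bounded, say f(v) ≤ L for all v ≥ 0 with L > 0, and let ρ₂ ≥ L/(6(1−α)). Then for every continuous nonnegative u : [0,1] → ℝ with ‖u‖ = ρ₂ (sup norm), one has ‖Au‖ ≤ ‖u‖. -/

import Mathlib

/-- The Green's function of the fourth-order problem. -/
noncomputable def G (t s : ℝ) : ℝ :=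
  if s ≤ t then (t ^ 3 * (1 - s) ^ 2 - (t - s) ^ 3) / 6
  else t ^ 3 * (1 - s) ^ 2 / 6

/-- The sup norm on `[0,1]` of a function `u : ℝ → ℝ`. -/
noncomputable def supNorm (u : ℝ → ℝ) : ℝ := ⨆ t : Set.Icc (0 : ℝ) 1, |u t|

lemma G_eq (t s : ℝ) : G t s = (t ^ 3 * (1 - s) ^ 2 - (max (t - s) 0) ^ 3) / 6 := by
  unfold G
  split_ifs with h
  · rw [max_eq_left (by linarith)]
  · rw [max_eq_right (by linarith)]
    ring

lemma G_cont : Continuous fun p : ℝ × ℝ => G p.1 p.2 := by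
  simp only [G_eq]
  fun_prop

lemma G_nonneg {t s : ℝ} (ht : t ∈ Set.Icc (0:ℝ) 1) (hs : s ∈ Set.Icc (0:ℝ) 1) :
    0 ≤ G t s := by
  obtain ⟨ht0, ht1⟩ := ht
  obtain ⟨hs0, hs1⟩ := hs
  unfold G
  split_ifs with h
  · have h1 : t - s ≤ t * (1 - s) := by nlinarith
    have h2 : (t - s) ^ 3 ≤ (t * (1 - s)) ^ 3 :=
      pow_le_pow_left₀ (by linarith) h1 3
    have h4 : (1 - s) ^ 3 ≤ (1 - s) ^ 2 := by nlinarith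
    have h3 : (t * (1 - s)) ^ 3 ≤ t ^ 3 * (1 - s) ^ 2 := by
      have := mul_le_mul_of_nonneg_left h4 (pow_nonneg ht0 3)
      nlinarith
    linarith
  · positivity

lemma G_le {t s : ℝ} (ht : t ∈ Set.Icc (0:ℝ) 1) (hs : s ∈ Set.Icc (0:ℝ) 1) :
    G t s ≤ 1 / 6 := by
  obtain ⟨ht0, ht1⟩ := ht
  obtain ⟨hs0, hs1⟩ := hs
  have key : t ^ 3 * (1 - s) ^ 2 ≤ 1 := by
    have a1 : t ^ 3 ≤ 1 := pow_le_one₀ ht0 ht1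
    have a2 : (1 - s) ^ 2 ≤ 1 := by nlinarith
    nlinarith [pow_nonneg ht0 3, sq_nonneg (1 - s)]
  unfold G
  split_ifs with h
  · have : 0 ≤ (t - s) ^ 3 := pow_nonneg (by linarith) 3
    linarith
  · linarith

theorem stmt_16 (f a : ℝ → ℝ)
    (hf : ContinuousOn f (Set.Ici 0))
    (hf0 : ∀ v ∈ Set.Ici (0 : ℝ), 0 ≤ f v)
    (ha : ContinuousOn a (Set.Icc 0 1))
    (ha0 : ∀ t ∈ Set.Icc (0 : ℝ) 1, 0 ≤ a t)
    (hα0 : 0 < ∫ t in (0 : ℝ)..1, a t)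
    (hα1 : (∫ t in (0 : ℝ)..1, a t) < 1)
    (L ρ₂ : ℝ) (hL : 0 < L)
    (hfL : ∀ v : ℝ, 0 ≤ v → f v ≤ L)
    (hρ₂ : L / (6 * (1 - ∫ t in (0 : ℝ)..1, a t)) ≤ ρ₂)
    (u Au : ℝ → ℝ)
    (hu : ContinuousOn u (Set.Icc 0 1))
    (hu0 : ∀ t ∈ Set.Icc (0 : ℝ) 1, 0 ≤ u t)
    (hunorm : supNorm u = ρ₂)
    (hAu : ∀ t, Au t = ∫ s in (0 : ℝ)..1,
      (G t s + (1 / (1 - ∫ τ in (0 : ℝ)..1, a τ)) *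
        ∫ τ in (0 : ℝ)..1, a τ * G τ s) * f (u s)) :
    supNorm Au ≤ supNorm u := by
  have h01 : (0:ℝ) ≤ 1 := by norm_num
  set α : ℝ := ∫ t in (0 : ℝ)..1, a t with hαdef
  have hα1' : 0 < 1 - α := by linarith
  set c : ℝ := 1 / (1 - α) with hcdef
  have hc0 : 0 < c := by positivity
  -- continuous extension of a
  set aE : ℝ → ℝ := Set.IccExtend h01 ((Set.Icc (0:ℝ) 1).restrict a) with haEdef
  have haEcont : Continuous aE := by
    apply Continuous.Icc_extend'
    exact continuousOn_iff_continuous_restrict.1 ha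
  have haEeq : ∀ x ∈ Set.Icc (0:ℝ) 1, aE x = a x := by
    intro x hx
    simp [haEdef, Set.IccExtend_of_mem h01 _ hx]
    rfl
  -- the inner function
  set H : ℝ → ℝ := fun s => ∫ τ in (0:ℝ)..1, aE τ * G τ s with hHdef
  have hHcont : Continuous H := by
    apply intervalIntegral.continuous_parametric_intervalIntegral_of_continuous'
      (f := fun s τ => aE τ * G τ s)
    apply Continuous.mul
    · exact haEcont.comp continuous_snd
    · exact G_cont.comp (continuous_snd.prodMk continuous_fst)
  have hHeq : ∀ s, (∫ τ in (0:ℝ)..1, a τ * G τ s) = H s := by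
    intro s
    apply intervalIntegral.integral_congr
    intro τ hτ
    rw [Set.uIcc_of_le h01] at hτ
    simp [haEeq τ hτ]
  have hαeq : (∫ τ in (0:ℝ)..1, aE τ) = α := by
    rw [hαdef]
    apply intervalIntegral.integral_congr
    intro τ hτ
    rw [Set.uIcc_of_le h01] at hτ
    exact haEeq τ hτ
  have hH0 : ∀ s ∈ Set.Icc (0:ℝ) 1, 0 ≤ H s := by
    intro s hs
    apply intervalIntegral.integral_nonneg h01
    intro τ hτ
    rw [haEeq τ hτ]
    exact mul_nonneg (ha0 τ hτ) (G_nonneg hτ hs)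
  have hHle : ∀ s ∈ Set.Icc (0:ℝ) 1, H s ≤ α / 6 := by
    intro s hs
    have : α / 6 = ∫ τ in (0:ℝ)..1, aE τ * (1/6) := by
      rw [intervalIntegral.integral_mul_const, hαeq]; ring
    rw [this]
    apply intervalIntegral.integral_mono_on h01
    · apply Continuous.intervalIntegrable
      exact haEcont.mul (G_cont.comp (continuous_id.prodMk continuous_const))
    · exact (haEcont.mul continuous_const).intervalIntegrable _ _
    · intro τ hτ
      rw [haEeq τ hτ]
      exact mul_le_mul_of_nonneg_left (G_le hτ hs) (ha0 τ hτ)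
  set C : ℝ := L / (6 * (1 - α)) with hCdef
  have hC0 : 0 < C := by positivity
  -- pointwise bound on Au
  have hbound : ∀ t ∈ Set.Icc (0:ℝ) 1, 0 ≤ Au t ∧ Au t ≤ C := by
    intro t ht
    have hAut : Au t = ∫ s in (0:ℝ)..1, (G t s + c * H s) * f (u s) := by
      rw [hAu t]
      apply intervalIntegral.integral_congr
      intro s _
      simp only [hHeq s]
    have hker0 : ∀ s ∈ Set.Icc (0:ℝ) 1, 0 ≤ G t s + c * H s := by
      intro s hs
      have := G_nonneg ht hs
      have := hH0 s hs
      nlinarith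
    have hfu0 : ∀ s ∈ Set.Icc (0:ℝ) 1, 0 ≤ f (u s) := fun s hs => hf0 _ (hu0 s hs)
    have hint : IntervalIntegrable (fun s => (G t s + c * H s) * f (u s))
        MeasureTheory.volume 0 1 := by
      apply ContinuousOn.intervalIntegrable
      rw [Set.uIcc_of_le h01]
      apply ContinuousOn.mul
      · apply ContinuousOn.add
        · exact (G_cont.comp (continuous_const.prodMk continuous_id)).continuousOn
        · exact (continuous_const.mul hHcont).continuousOn
      · exact hf.comp hu (fun s hs => hu0 s hs)
    constructor
    · rw [hAut]
      apply intervalIntegral.integral_nonneg h01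
      intro s hs
      exact mul_nonneg (hker0 s hs) (hfu0 s hs)
    · rw [hAut]
      calc ∫ s in (0:ℝ)..1, (G t s + c * H s) * f (u s)
          ≤ ∫ s in (0:ℝ)..1, C := by
            apply intervalIntegral.integral_mono_on h01 hint
              (intervalIntegrable_const)
            intro s hs
            have h1 : (G t s + c * H s) * f (u s) ≤ (G t s + c * H s) * L :=
              mul_le_mul_of_nonneg_left (hfL _ (hu0 s hs)) (hker0 s hs)
            have h2 : G t s + c * H s ≤ 1/6 + c * (α/6) := by
              have := G_le ht hs
              have := hHle s hs
              nlinarith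
            have hne : (1 - α) ≠ 0 := ne_of_gt hα1'
            have h3 : (1/6 + c * (α/6)) * L = C := by
              rw [hCdef, hcdef]
              field_simp
              ring
            nlinarith
        _ = C := by simp
  have hρ₂' : C ≤ ρ₂ := hρ₂
  haveI : Nonempty (Set.Icc (0:ℝ) 1) := ⟨⟨0, by norm_num, by norm_num⟩⟩
  rw [hunorm]
  unfold supNorm
  apply ciSup_le
  intro t
  obtain ⟨h1, h2⟩ := hbound t t.2
  rw [abs_of_nonneg h1]
  linarith
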